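/- Let p ≡ 1 (mod 8) be a prime and write p = e² - 2f² with e, f ∈ ℤ, so that π = e + f√2 ∈ ℤ[√2] is a prime of norm p with π ≡ 1 (mod 2ℤ[√2]). Then the quadratic residue symbol [π/π̄] equals the rational biquadratic symbol (2/p)₄. -/

import Mathlib

open Classical in
/-- The quadratic residue symbol `[α/π]`: `1` if `α` is a square modulo `π`, `-1` otherwise. -/
noncomputable def qr {R : Type*} [CommRing R] (α π : R) : ℤ :=
  if ∃ τ : R, π ∣ α - τ ^ 2 then 1 else -1

/-- For a prime `p ≡ 1 (mod 8)` with `p = e² - 2f²`, `π = e + f√2 ≡ 1 (mod 2ℤ[√2])`,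
the symbol `[π/π̄]` equals the rational biquadratic symbol `(2/p)₄`. -/
theorem stmt2 (p : ℕ) (hp : p.Prime) (h8 : p % 8 = 1) (e f : ℤ)
    (hnorm : e ^ 2 - 2 * f ^ 2 = (p : ℤ))
    (hcong : (2 : Zsqrtd 2) ∣ (⟨e, f⟩ : Zsqrtd 2) - 1)
    (x : ℤ) (hx : (x : ZMod p) ^ 2 = 2) :
    qr (⟨e, f⟩ : Zsqrtd 2) (star (⟨e, f⟩ : Zsqrtd 2)) = jacobiSym x p := by
  haveI : Fact p.Prime := ⟨hp⟩
  have hp2 : p ≠ 2 := by omega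
  have hp5 : 5 ≤ p := by have := hp.two_le; omega
  have hpodd : Odd p := Nat.odd_iff.mpr (by omega)
  have hp4 : p % 4 = 1 := by omega
  have hpZ : Prime (p : ℤ) := Nat.prime_iff_prime_int.mp hp
  set π : Zsqrtd 2 := ⟨e, f⟩ with hπdef
  have hstar : star π = ⟨e, -f⟩ := Zsqrtd.star_mk e f
  -- p = π * star π
  have hmul : ((p : ℤ) : Zsqrtd 2) = π * star π := by
    rw [← Zsqrtd.norm_eq_mul_conj, Zsqrtd.norm_def]
    congr 1
    rw [← hnorm]; ring
  -- p does not divide f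
  have hpf : ¬ (p : ℤ) ∣ f := by
    intro h
    have h2f : (p : ℤ) ∣ 2 * f ^ 2 := Dvd.dvd.mul_left (dvd_pow h two_ne_zero) 2
    have he2 : (p : ℤ) ∣ e ^ 2 := by
      have : e ^ 2 = (p : ℤ) + 2 * f ^ 2 := by rw [← hnorm]; ring
      rw [this]; exact dvd_add dvd_rfl h2f
    have he : (p : ℤ) ∣ e := hpZ.dvd_of_dvd_pow he2
    obtain ⟨a, ha⟩ := he
    obtain ⟨b, hb⟩ := h
    subst ha hb
    have hpne : (p : ℤ) ≠ 0 := by exact_mod_cast hp.ne_zero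
    have hkey : (p : ℤ) * 1 = (p : ℤ) * ((p : ℤ) * (a ^ 2 - 2 * b ^ 2)) := by
      linear_combination (-1 : ℤ) * hnorm
    have h1 := mul_left_cancel₀ hpne hkey
    have hdvd : (p : ℤ) ∣ 1 := ⟨(p : ℤ) * (a ^ 2 - 2 * b ^ 2) / (p:ℤ), by
      exact h1.trans (by rw [Int.mul_ediv_cancel_left _ hpne])⟩
    have hle := Int.le_of_dvd one_pos hdvd
    have : (2 : ℤ) ≤ (p : ℤ) := by exact_mod_cast hp.two_le
    omega
  have hpe : ¬ (p : ℤ) ∣ e := by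
    intro h
    have he2 : (p : ℤ) ∣ e ^ 2 := dvd_pow h two_ne_zero
    have h2f : (p : ℤ) ∣ 2 * f ^ 2 := by
      have : 2 * f ^ 2 = e ^ 2 - (p : ℤ) := by rw [← hnorm]; ring
      rw [this]; exact dvd_sub he2 dvd_rfl
    rcases hpZ.dvd_mul.mp h2f with h2 | hf2
    · have := Int.le_of_dvd (by norm_num) h2
      have : (5 : ℤ) ≤ (p : ℤ) := by exact_mod_cast hp5
      omega
    · exact hpf (hpZ.dvd_of_dvd_pow hf2)
  have hf0 : (f : ZMod p) ≠ 0 := fun h => hpf ((ZMod.intCast_zmod_eq_zero_iff_dvd f p).mp h)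
  have he0 : (e : ZMod p) ≠ 0 := fun h => hpe ((ZMod.intCast_zmod_eq_zero_iff_dvd e p).mp h)
  have htwo0 : (2 : ZMod p) ≠ 0 := by
    intro h
    have : ((2 : ℕ) : ZMod p) = 0 := by exact_mod_cast h
    have := (ZMod.natCast_eq_zero_iff 2 p).mp this
    have := Nat.le_of_dvd (by norm_num) this
    omega
  -- e² = 2f² in ZMod p
  have hef : (e : ZMod p) ^ 2 = 2 * (f : ZMod p) ^ 2 := by
    have h0 := congrArg (Int.cast : ℤ → ZMod p) hnorm
    push_cast at h0
    rw [ZMod.natCast_self] at h0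
    linear_combination h0
  -- the square root of 2 mod p coming from π
  set s : ZMod p := (e : ZMod p) * (f : ZMod p)⁻¹ with hsdef
  have hs : s * s = ((2 : ℤ) : ZMod p) := by
    push_cast
    rw [hsdef]
    field_simp
    linear_combination hef
  set φ : Zsqrtd 2 →+* ZMod p := Zsqrtd.lift ⟨s, hs⟩ with hφdef
  have hφ_apply : ∀ z : Zsqrtd 2, φ z = (z.re : ZMod p) + (z.im : ZMod p) * s := by
    intro z; rfl
  have hφπ : φ π = 2 * (e : ZMod p) := by
    rw [hφ_apply]
    show (e : ZMod p) + (f : ZMod p) * s = _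
    rw [hsdef]
    field_simp
    ring
  have hφstar : φ (star π) = 0 := by
    rw [hφ_apply, hstar]
    show (e : ZMod p) + ((-f : ℤ) : ZMod p) * s = 0
    push_cast
    rw [hsdef]
    field_simp
    ring
  -- the key equivalence
  have key : (∃ τ : Zsqrtd 2, star π ∣ π - τ ^ 2) ↔ IsSquare (((2 * e : ℤ)) : ZMod p) := by
    constructor
    · rintro ⟨τ, c, hc⟩
      refine ⟨φ τ, ?_⟩
      have := congrArg φ hc
      rw [map_sub, map_mul, hφstar, zero_mul, map_pow, sub_eq_zero] at this
      push_cast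
      rw [← hφπ, this]; ring
    · rintro ⟨y, hy⟩
      obtain ⟨t, ht⟩ : ∃ t : ℤ, (t : ZMod p) = y := ⟨(y.val : ℤ), by
        push_cast; exact ZMod.natCast_rightInverse y⟩
      refine ⟨(t : Zsqrtd 2), ?_⟩
      have hdvd : (p : ℤ) ∣ 2 * e - t ^ 2 := by
        apply (ZMod.intCast_zmod_eq_zero_iff_dvd _ p).mp
        push_cast
        rw [ht]
        push_cast at hy
        rw [hy]; ring
      have h1 : star π ∣ (((2 * e - t ^ 2 : ℤ)) : Zsqrtd 2) := by
        obtain ⟨c, hc⟩ := hdvd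
        rw [hc, Int.cast_mul, hmul]
        exact (dvd_mul_left (star π) π).mul_right _
      have h2 : π - ((t : ℤ) : Zsqrtd 2) ^ 2 = (((2 * e - t ^ 2 : ℤ)) : Zsqrtd 2) - star π := by
        rw [hstar]
        ext <;> simp [hπdef, Zsqrtd.ext_iff] <;> ring
      rw [h2]
      exact dvd_sub h1 (dvd_refl _)
  -- congruence helper for the Legendre symbol
  have hcongr : ∀ a b : ℤ, ((a : ZMod p) = (b : ZMod p)) → legendreSym p a = legendreSym p b := by
    intro a b h
    unfold legendreSym
    rw [h]
  -- gcd e f = 1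
  have hgcd : Int.gcd e f = 1 := by
    set g : ℕ := Int.gcd e f with hg
    have hge : (g : ℤ) ∣ e := Int.gcd_dvd_left e f
    have hgf : (g : ℤ) ∣ f := Int.gcd_dvd_right e f
    have hsq : ((g ^ 2 : ℕ) : ℤ) ∣ (p : ℤ) := by
      push_cast
      rw [← hnorm]
      exact dvd_sub (pow_dvd_pow_of_dvd hge 2) (Dvd.dvd.mul_left (pow_dvd_pow_of_dvd hgf 2) 2)
    have hN : g ^ 2 ∣ p := Int.ofNat_dvd.mp hsq
    have hgp : g ∣ p := dvd_trans (dvd_pow_self g two_ne_zero) hN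
    rcases hp.eq_one_or_self_of_dvd g hgp with h1 | h1
    · exact h1
    · exfalso
      rw [h1] at hN
      have := Nat.le_of_dvd hp.pos hN
      nlinarith [hp.two_le]
  -- (f/p) = 1
  have hf0' : f.natAbs ≠ 0 := Int.natAbs_ne_zero.mpr (fun h => hpf (h ▸ dvd_zero _))
  have hlegf : legendreSym p f = 1 := by
    obtain ⟨k, m, hm2, hfm⟩ := Nat.exists_eq_pow_mul_and_not_dvd hf0' 2 (by norm_num)
    have hmodd : Odd m := Nat.odd_iff.mpr (Nat.two_dvd_ne_zero.mp hm2)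
    have hχ₄ : ZMod.χ₄ (p : ZMod 4) = 1 := ZMod.χ₄_nat_one_mod_four hp4
    have hχ₈ : ZMod.χ₈ (p : ZMod 8) = 1 := by
      rw [ZMod.χ₈_nat_mod_eight, h8]; decide
    have h1 : jacobiSym f p = jacobiSym (f.natAbs : ℤ) p := by
      rcases Int.natAbs_eq f with h | h
      · rw [← h]
      · conv_lhs => rw [h, show (-(f.natAbs : ℤ)) = -1 * (f.natAbs : ℤ) from by ring]
        rw [jacobiSym.mul_left, jacobiSym.at_neg_one hpodd, hχ₄, one_mul]
    have h2 : jacobiSym (f.natAbs : ℤ) p = jacobiSym (m : ℤ) p := by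
      rw [hfm]
      push_cast
      rw [jacobiSym.mul_left, jacobiSym.pow_left, jacobiSym.at_two hpodd, hχ₈, one_pow, one_mul]
    have h3 : jacobiSym (m : ℤ) p = jacobiSym (p : ℤ) m :=
      jacobiSym.quadratic_reciprocity_one_mod_four' hmodd hp4
    have hmf : (m : ℤ) ∣ f := by
      have h1 : (m : ℤ) ∣ (f.natAbs : ℤ) := by
        exact_mod_cast Int.ofNat_dvd.mpr ⟨2 ^ k, by rw [hfm]; ring⟩
      exact dvd_trans h1 (Int.natAbs_dvd.mpr dvd_rfl)
    have h4 : jacobiSym (p : ℤ) m = jacobiSym (e ^ 2) m := by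
      apply jacobiSym.mod_left'
      have : ((m : ℤ)) ∣ e ^ 2 - (p : ℤ) := by
        have : e ^ 2 - (p : ℤ) = 2 * f ^ 2 := by rw [← hnorm]; ring
        rw [this]
        exact Dvd.dvd.mul_left (dvd_pow hmf two_ne_zero) 2
      exact Int.modEq_iff_dvd.mpr this
    have hgem : Int.gcd e (m : ℤ) = 1 := by
      have hcop : Nat.Coprime e.natAbs f.natAbs := hgcd
      have hmdvd : m ∣ f.natAbs := ⟨2 ^ k, by rw [hfm]; ring⟩
      have := Nat.Coprime.coprime_dvd_right hmdvd hcop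
      simpa [Int.gcd] using this
    have h5 : jacobiSym (e ^ 2) m = 1 := jacobiSym.sq_one' hgem
    rw [jacobiSym.legendreSym.to_jacobiSym, h1, h2, h3, h4, h5]
  -- (x/p) = (2e/p)
  have hx0 : (x : ZMod p) ≠ 0 := by
    intro h
    rw [h] at hx
    simp at hx
    exact htwo0 hx.symm
  have hfx : ((f : ZMod p) * x - e) * ((f : ZMod p) * x + e) = 0 := by
    linear_combination (f : ZMod p) ^ 2 * hx - hef
  have hle : legendreSym p x = legendreSym p (2 * e) := by
    have hmulx : legendreSym p (f * x) = legendreSym p x := by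
      rw [legendreSym.mul, hlegf, one_mul]
    have h2e : legendreSym p (2 * e) = legendreSym p e := by
      rw [legendreSym.mul, legendreSym.at_two hp2, ZMod.χ₈_nat_mod_eight, h8]
      norm_num
    rcases mul_eq_zero.mp hfx with h | h
    · have hcast : ((f * x : ℤ) : ZMod p) = ((e : ℤ) : ZMod p) := by
        push_cast
        linear_combination h
      rw [← hmulx, hcongr _ _ hcast, h2e]
    · have hcast : ((f * x : ℤ) : ZMod p) = ((-e : ℤ) : ZMod p) := by
        push_cast
        linear_combination h
      rw [← hmulx, hcongr _ _ hcast, h2e]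
      have : (-e : ℤ) = -1 * e := by ring
      rw [this, legendreSym.mul, legendreSym.at_neg_one hp2, ZMod.χ₄_nat_one_mod_four hp4, one_mul]
  have h2e0 : (((2 * e : ℤ)) : ZMod p) ≠ 0 := by
    push_cast
    exact mul_ne_zero htwo0 he0
  -- final assembly
  rw [qr]
  rw [← jacobiSym.legendreSym.to_jacobiSym, hle]
  split_ifs with h
  · exact ((legendreSym.eq_one_iff p h2e0).mpr (key.mp h)).symm
  · exact (legendreSym.eq_neg_one_iff p |>.mpr (fun hsq => h (key.mpr hsq))).symm
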